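/- Let Q₁, …, Q_N be pairwise disjoint compact rectangles in ℝ² with sides parallel to the axes, and let Q be their union. For λ > 0, let D(λ, Q) denote the number of Dirichlet Laplacian eigenvalues of Q (counted with multiplicity, the union of the eigenvalue lists of the rectangles) that are ≤ λ. Then 4π·D(λ,Q)/λ ≥ Area(Q) − 2·Perimeter(Q)·λ^{−1/2}. -/

import Mathlib

open Real MeasureTheory

set_option maxHeartbeats 1000000

open Real MeasureTheory

lemma integral_quarter : ∫ x in (0:ℝ)..1, Real.sqrt (1 - x^2) = π/4 := by
  have hcont : Continuous fun x : ℝ => Real.sqrt (1 - x^2) := by continuity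
  have h1 : ∫ x in (-1:ℝ)..0, Real.sqrt (1 - x^2) = ∫ x in (0:ℝ)..1, Real.sqrt (1 - x^2) := by
    have := intervalIntegral.integral_comp_neg (a := (0:ℝ)) (b := 1)
      (fun x => Real.sqrt (1 - x^2))
    simp only [neg_sq, neg_zero] at this
    exact this.symm
  have h2 : (∫ x in (-1:ℝ)..0, Real.sqrt (1 - x^2)) + ∫ x in (0:ℝ)..1, Real.sqrt (1 - x^2)
      = π/2 := by
    rw [intervalIntegral.integral_add_adjacent_intervals (hcont.intervalIntegrable _ _)
      (hcont.intervalIntegrable _ _)]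
    exact integral_sqrt_one_sub_sq
  linarith

lemma count_lb (A B : ℝ) (hA : 0 < A) (hB : 0 < B) :
    π/4 * A * B - A - B ≤
    (Nat.card {p : ℕ × ℕ // 0 < p.1 ∧ 0 < p.2 ∧ (p.1:ℝ)^2/A^2 + (p.2:ℝ)^2/B^2 ≤ 1} : ℝ) := by
  classical
  rcases lt_or_ge A 1 with hA1 | hA1
  · have hπA : π * A ≤ 4 := by nlinarith [Real.pi_le_four, Real.pi_pos]
    have h1 : π/4 * A * B ≤ B := by nlinarith [mul_le_mul_of_nonneg_left hπA hB.le]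
    have h0 : (0:ℝ) ≤ (Nat.card {p : ℕ × ℕ // 0 < p.1 ∧ 0 < p.2 ∧
        (p.1:ℝ)^2/A^2 + (p.2:ℝ)^2/B^2 ≤ 1} : ℝ) := Nat.cast_nonneg _
    linarith
  -- main case A ≥ 1
  set f : ℝ → ℝ := fun t => Real.sqrt (1 - (t/A)^2) with hf
  have hfcont : Continuous f := by unfold f; continuity
  have hfnn : ∀ t, 0 ≤ f t := fun t => Real.sqrt_nonneg _
  have hfle1 : ∀ t, f t ≤ 1 := by
    intro t
    calc f t ≤ Real.sqrt 1 := Real.sqrt_le_sqrt (by nlinarith [sq_nonneg (t/A)])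
    _ = 1 := Real.sqrt_one
  have hanti : ∀ C : ℝ, AntitoneOn f (Set.Icc 0 C) := by
    intro C a ha b hb hab
    apply Real.sqrt_le_sqrt
    have h1 : 0 ≤ a := ha.1
    have h2 : a / A ≤ b / A := by gcongr
    nlinarith [div_nonneg h1 hA.le]
  set M := ⌊A⌋₊ with hM
  have hMA : (M:ℝ) ≤ A := Nat.floor_le hA.le
  have hAM : A < M + 1 := Nat.lt_floor_add_one A
  have hint : ∫ t in (1:ℝ)..(1 + M), f t ≤ ∑ i ∈ Finset.range M, f (1 + i) := by
    apply AntitoneOn.integral_le_sum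
    exact (hanti (1 + M)).mono (Set.Icc_subset_Icc (by norm_num) le_rfl)
  have hsplit : (∫ t in (0:ℝ)..1, f t) + ∫ t in (1:ℝ)..(1 + M), f t
      = ∫ t in (0:ℝ)..(1 + M), f t :=
    intervalIntegral.integral_add_adjacent_intervals (hfcont.intervalIntegrable _ _)
      (hfcont.intervalIntegrable _ _)
  have hmono : ∫ t in (0:ℝ)..A, f t ≤ ∫ t in (0:ℝ)..(1 + M), f t := by
    apply intervalIntegral.integral_mono_interval le_rfl hA.le (by linarith)
    · filter_upwards with t using hfnn t
    · exact hfcont.intervalIntegrable _ _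
  have hvalA : ∫ t in (0:ℝ)..A, f t = π/4 * A := by
    have hc := intervalIntegral.integral_comp_div (a := (0:ℝ)) (b := A)
      (f := fun u => Real.sqrt (1 - u^2)) (ne_of_gt hA)
    unfold f
    rw [hc]
    rw [zero_div, div_self (ne_of_gt hA), smul_eq_mul, integral_quarter]
    ring
  have hint01 : ∫ t in (0:ℝ)..1, f t ≤ 1 := by
    have hm := intervalIntegral.integral_mono_on (a := (0:ℝ)) (b := 1) (μ := volume)
      (f := f) (g := fun _ => (1:ℝ)) (by norm_num)
      (hfcont.intervalIntegrable _ _) intervalIntegrable_const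
      (fun t _ => hfle1 t)
    simpa using hm
  have hsumf : π/4 * A - 1 ≤ ∑ i ∈ Finset.range M, f (1 + i) := by
    have h3 : π/4 * A ≤ (∫ t in (0:ℝ)..1, f t) + ∫ t in (1:ℝ)..(1 + M), f t := by
      rw [hsplit, ← hvalA]; exact hmono
    linarith
  set P : ℕ × ℕ → Prop := fun p => 0 < p.1 ∧ 0 < p.2 ∧ (p.1:ℝ)^2/A^2 + (p.2:ℝ)^2/B^2 ≤ 1 with hP
  set T : Finset (ℕ × ℕ) := (Finset.Icc 1 M ×ˢ Finset.Icc 1 ⌊B⌋₊).filter P with hT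
  have hset : {p : ℕ × ℕ | P p} = ↑T := by
    ext p
    simp only [hT, Finset.coe_filter, Finset.mem_product, Finset.mem_Icc,
      Set.mem_setOf_eq]
    constructor
    · rintro hp
      obtain ⟨h1, h2, h3⟩ := hp
      refine ⟨⟨⟨h1, ?_⟩, ⟨h2, ?_⟩⟩, h1, h2, h3⟩
      · apply Nat.le_floor
        have hp2 : (0:ℝ) ≤ (p.2:ℝ)^2/B^2 := by positivity
        have hd : (p.1:ℝ)^2/A^2 ≤ 1 := by linarith
        rw [div_le_one (by positivity)] at hd
        nlinarith [show (0:ℝ) ≤ (p.1:ℝ) by positivity]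
      · apply Nat.le_floor
        have hp1 : (0:ℝ) ≤ (p.1:ℝ)^2/A^2 := by positivity
        have hd : (p.2:ℝ)^2/B^2 ≤ 1 := by linarith
        rw [div_le_one (by positivity)] at hd
        nlinarith [show (0:ℝ) ≤ (p.2:ℝ) by positivity]
    · rintro ⟨-, hp⟩; exact hp
  have hcard : Nat.card {p : ℕ × ℕ // P p} = T.card := by
    calc Nat.card {p : ℕ × ℕ // P p} = Set.ncard {p : ℕ × ℕ | P p} :=
        (Nat.card_coe_set_eq _)
    _ = T.card := by rw [hset, Set.ncard_coe_finset]
  set nm : ℕ → ℕ := fun m => ⌊B * f m⌋₊ with hnm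
  set U : Finset (ℕ × ℕ) :=
    (Finset.range M).biUnion (fun i => {i+1} ×ˢ Finset.Icc 1 (nm (i+1))) with hU
  have hUT : U ⊆ T := by
    intro p hp
    simp only [hU, Finset.mem_biUnion, Finset.mem_product, Finset.mem_singleton,
      Finset.mem_Icc, Finset.mem_range] at hp
    obtain ⟨i, hi, hp1, hn1, hn2⟩ := hp
    have hm1 : 1 ≤ p.1 := by omega
    have hmM : p.1 ≤ M := by omega
    have hn2' : p.2 ≤ nm p.1 := by rw [hp1]; exact hn2
    have hBf : (p.2:ℝ) ≤ B * f p.1 := by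
      calc (p.2:ℝ) ≤ (nm p.1 : ℝ) := by exact_mod_cast hn2'
      _ ≤ B * f p.1 := Nat.floor_le (by positivity)
    have hp2R : (1:ℝ) ≤ (p.2:ℝ) := by exact_mod_cast hn1
    have hc : 0 ≤ 1 - ((p.1:ℝ)/A)^2 := by
      by_contra hneg
      push_neg at hneg
      have hz : f p.1 = 0 := Real.sqrt_eq_zero'.mpr (by linarith)
      rw [hz, mul_zero] at hBf
      linarith
    have hkey : ((p.1:ℝ)/A)^2 * A^2 = (p.1:ℝ)^2 := by field_simp
    have hsq : (p.2:ℝ)^2 ≤ B^2 * (1 - ((p.1:ℝ)/A)^2) := by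
      have h2 : (f p.1)^2 = 1 - ((p.1:ℝ)/A)^2 := Real.sq_sqrt hc
      nlinarith [hfnn ((p.1:ℝ)), hB.le, show (0:ℝ) ≤ (p.2:ℝ) by positivity]
    have hsq2 : A^2 * (p.2:ℝ)^2 ≤ A^2*B^2 - B^2*(p.1:ℝ)^2 := by
      nlinarith [hsq, sq_nonneg A]
    simp only [hT, Finset.mem_filter, Finset.mem_product, Finset.mem_Icc]
    refine ⟨⟨⟨hm1, hmM⟩, ?_, ?_⟩, ?_, ?_, ?_⟩
    · omega
    · calc p.2 ≤ nm p.1 := hn2'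
      _ ≤ ⌊B⌋₊ := Nat.floor_le_floor (by nlinarith [hfle1 ((p.1:ℝ)), hfnn ((p.1:ℝ)), hB.le])
    · omega
    · omega
    · rw [div_add_div _ _ (by positivity : (A:ℝ)^2 ≠ 0) (by positivity : (B:ℝ)^2 ≠ 0),
        div_le_one (by positivity)]
      nlinarith [hsq2]
  have hcardU : U.card = ∑ i ∈ Finset.range M, nm (i+1) := by
    rw [Finset.card_biUnion]
    · apply Finset.sum_congr rfl
      intro i _
      rw [Finset.card_product]
      simp
    · intro a _ b _ hab
      apply Finset.disjoint_left.mpr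
      intro p hp hp'
      simp only [Finset.mem_product, Finset.mem_singleton] at hp hp'
      omega
  have hterm : ∀ i ∈ Finset.range M, B * f (1 + (i:ℝ)) - 1 ≤ (nm (i+1) : ℝ) := by
    intro i _
    have h1 : ((i:ℝ) + 1) = (((i+1 : ℕ)):ℝ) := by push_cast; ring
    have := Nat.sub_one_lt_floor (B * f ((i+1 : ℕ)))
    have harg : f (1 + (i:ℝ)) = f (((i+1:ℕ)):ℝ) := by rw [← h1, add_comm]
    rw [harg]
    linarith
  calc π/4 * A * B - A - B ≤ B * (π/4*A - 1) - M := by nlinarith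
  _ ≤ B * (∑ i ∈ Finset.range M, f (1 + i)) - M :=
      sub_le_sub_right (mul_le_mul_of_nonneg_left hsumf hB.le) _
  _ = ∑ i ∈ Finset.range M, (B * f (1 + (i:ℝ)) - 1) := by
      rw [Finset.sum_sub_distrib, Finset.mul_sum]; simp
  _ ≤ ∑ i ∈ Finset.range M, (nm (i+1) : ℝ) := Finset.sum_le_sum hterm
  _ = (U.card : ℝ) := by rw [hcardU]; push_cast; ring
  _ ≤ (T.card : ℝ) := by exact_mod_cast Finset.card_le_card hUT
  _ = _ := by rw [← hcard]

/-- Dirichlet eigenvalue counting lower bound for a disjoint union of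
axis-parallel rectangles `Q_i = [x i, x i + w i] × [y i, y i + h i]`. -/
theorem stmt_2 (N : ℕ) (x y w h : Fin N → ℝ)
    (hw : ∀ i, 0 < w i) (hh : ∀ i, 0 < h i)
    (hdisj : ∀ i j : Fin N, i ≠ j →
      Disjoint ((Set.Icc (x i) (x i + w i)) ×ˢ (Set.Icc (y i) (y i + h i)))
        ((Set.Icc (x j) (x j + w j)) ×ˢ (Set.Icc (y j) (y j + h j))))
    (lam : ℝ) (hlam : 0 < lam) :
    4 * π * (∑ i, (Nat.card {p : ℕ × ℕ // 0 < p.1 ∧ 0 < p.2 ∧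
        π^2 * ((p.1:ℝ)^2/(w i)^2 + (p.2:ℝ)^2/(h i)^2) ≤ lam} : ℝ)) / lam
      ≥ (∑ i, w i * h i) - 2 * (∑ i, 2*(w i + h i)) / Real.sqrt lam := by
  have hπ : (0:ℝ) < π := Real.pi_pos
  have hs0 : 0 < Real.sqrt lam := Real.sqrt_pos.mpr hlam
  have hs : Real.sqrt lam * Real.sqrt lam = lam := Real.mul_self_sqrt hlam.le
  set A : Fin N → ℝ := fun i => w i * Real.sqrt lam / π with hA
  set B : Fin N → ℝ := fun i => h i * Real.sqrt lam / π with hB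
  have hAp : ∀ i, 0 < A i := fun i => div_pos (mul_pos (hw i) hs0) hπ
  have hBp : ∀ i, 0 < B i := fun i => div_pos (mul_pos (hh i) hs0) hπ
  have key : ∀ i, lam * (w i * h i)/(4*π) - (w i + h i) * Real.sqrt lam / π ≤
      (Nat.card {p : ℕ × ℕ // 0 < p.1 ∧ 0 < p.2 ∧
        π^2 * ((p.1:ℝ)^2/(w i)^2 + (p.2:ℝ)^2/(h i)^2) ≤ lam} : ℝ) := by
    intro i
    have hiff : ∀ p : ℕ × ℕ,
        (0 < p.1 ∧ 0 < p.2 ∧ π^2 * ((p.1:ℝ)^2/(w i)^2 + (p.2:ℝ)^2/(h i)^2) ≤ lam) ↔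
        (0 < p.1 ∧ 0 < p.2 ∧ (p.1:ℝ)^2/(A i)^2 + (p.2:ℝ)^2/(B i)^2 ≤ 1) := by
      intro p
      have hA2 : (A i)^2 = (w i)^2 * lam / π^2 := by
        rw [hA]; rw [div_pow, mul_pow, sq (Real.sqrt lam), hs]
      have hB2 : (B i)^2 = (h i)^2 * lam / π^2 := by
        rw [hB]; rw [div_pow, mul_pow, sq (Real.sqrt lam), hs]
      have heq : (p.1:ℝ)^2/(A i)^2 + (p.2:ℝ)^2/(B i)^2
          = π^2 * ((p.1:ℝ)^2/(w i)^2 + (p.2:ℝ)^2/(h i)^2) / lam := by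
        rw [hA2, hB2]
        field_simp [hlam.ne', (hw i).ne', (hh i).ne', hπ.ne']
      rw [heq, div_le_one hlam]
    rw [show (Nat.card {p : ℕ × ℕ // 0 < p.1 ∧ 0 < p.2 ∧
        π^2 * ((p.1:ℝ)^2/(w i)^2 + (p.2:ℝ)^2/(h i)^2) ≤ lam}) =
        Nat.card {p : ℕ × ℕ // 0 < p.1 ∧ 0 < p.2 ∧
        (p.1:ℝ)^2/(A i)^2 + (p.2:ℝ)^2/(B i)^2 ≤ 1} from
      Nat.card_congr (Equiv.subtypeEquivRight hiff)]
    refine le_trans (le_of_eq ?_) (count_lb (A i) (B i) (hAp i) (hBp i))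
    rw [hA, hB]
    field_simp
    linear_combination (-(w i * h i)) * hs
  have hsum := Finset.sum_le_sum (fun i (_ : i ∈ Finset.univ) => key i)
  have hSig : ∑ i, (lam * (w i * h i)/(4*π) - (w i + h i) * Real.sqrt lam / π)
      = lam/(4*π) * (∑ i, w i * h i) - Real.sqrt lam/π * (∑ i, (w i + h i)) := by
    rw [Finset.sum_sub_distrib, Finset.mul_sum, Finset.mul_sum]
    congr 1 <;> exact Finset.sum_congr rfl (fun i _ => by ring)
  have h2 : (∑ i, 2*(w i + h i)) = 2 * ∑ i, (w i + h i) := by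
    rw [Finset.mul_sum]
  rw [ge_iff_le, le_div_iff₀ hlam, h2]
  set S1 := ∑ i, w i * h i with hS1
  set S2 := ∑ i, (w i + h i) with hS2
  calc (S1 - 2 * (2 * S2) / Real.sqrt lam) * lam
      = 4 * π * (lam/(4*π) * S1 - Real.sqrt lam/π * S2) := by
        field_simp
        linear_combination (4 * S2) * hs
  _ ≤ 4 * π * (∑ i, (Nat.card {p : ℕ × ℕ // 0 < p.1 ∧ 0 < p.2 ∧
        π^2 * ((p.1:ℝ)^2/(w i)^2 + (p.2:ℝ)^2/(h i)^2) ≤ lam} : ℝ)) := by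
      refine mul_le_mul_of_nonneg_left ?_ (by positivity)
      rw [← hSig]
      exact hsum
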